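/- Let d ≥ 1 and M > 0. Let (V_i)_{i≥1} be an i.i.d. sequence of random variables with the Beta(1, M) distribution on [0,1], and define the stick-breaking weights ϖ_j = V_j ∏_{i=1}^{j−1} (1 − V_i) for j ≥ 1. Then the expectation E[ (∑_{j=1}^{d+1} ϖ_j²)^{−d/2} ] is finite. -/

import Mathlib

open MeasureTheory ProbabilityTheory Real Filter

/-- The Beta(1, M) distribution on [0,1]: density `M (1−v)^{M−1}` with respect to
Lebesgue measure restricted to `[0,1]`. -/
noncomputable def betaOne (M : ℝ) : Measure ℝ :=
  (volume.restrict (Set.Icc (0 : ℝ) 1)).withDensity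
    fun v => ENNReal.ofReal (M * (1 - v) ^ (M - 1))

/-- The stick-breaking weights `ϖ_j = V_j ∏_{i<j} (1 − V_i)` (0-indexed: `stick V j`
is the (j+1)-st weight). -/
noncomputable def stick {Ω : Type*} (V : ℕ → Ω → ℝ) (j : ℕ) (ω : Ω) : ℝ :=
  V j ω * ∏ i ∈ Finset.range j, (1 - V i ω)

lemma stick_telescope (v : ℕ → ℝ) (n : ℕ) :
    ∑ j ∈ Finset.range n, v j * ∏ i ∈ Finset.range j, (1 - v i)
      = 1 - ∏ i ∈ Finset.range n, (1 - v i) := by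
  induction n with
  | zero => simp
  | succ m ih => rw [Finset.sum_range_succ, Finset.prod_range_succ, ih]; ring

/-- Pointwise bound: `(∑ ϖ_j²)^{-d/2} ≤ (d+1)^{d/2} ∏ v_i^{-d/(d+1)}`. -/
lemma aux_pointwise (d : ℕ) (hd : 1 ≤ d) (v : ℕ → ℝ)
    (hv : ∀ i ∈ Finset.range (d + 1), v i ∈ Set.Ioc (0 : ℝ) 1) :
    (∑ j ∈ Finset.range (d + 1), (v j * ∏ i ∈ Finset.range j, (1 - v i)) ^ 2) ^ (-(d : ℝ) / 2)
      ≤ ((d : ℝ) + 1) ^ ((d : ℝ) / 2)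
        * ∏ i ∈ Finset.range (d + 1), v i ^ (-((d : ℝ) / ((d : ℝ) + 1))) := by
  set n := d + 1 with hn
  have hnℝ : ((n : ℝ)) = (d : ℝ) + 1 := by push_cast [hn]; ring
  have hnpos : (0 : ℝ) < (n : ℝ) := by rw [hnℝ]; positivity
  set S := ∑ j ∈ Finset.range n, v j * ∏ i ∈ Finset.range j, (1 - v i) with hSdef
  set Q := ∑ j ∈ Finset.range n, (v j * ∏ i ∈ Finset.range j, (1 - v i)) ^ 2 with hQdef
  have h01 : ∀ i ∈ Finset.range n, 0 ≤ 1 - v i ∧ 1 - v i ≤ 1 := fun i hi =>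
    ⟨by linarith [(hv i hi).2], by linarith [(hv i hi).1]⟩
  have hS : S = 1 - ∏ i ∈ Finset.range n, (1 - v i) := stick_telescope v n
  have hvS : ∀ k ∈ Finset.range n, v k ≤ S := by
    intro k hk
    rw [hS]
    have h1 : ∏ i ∈ Finset.range n, (1 - v i)
        = (1 - v k) * ∏ i ∈ (Finset.range n).erase k, (1 - v i) :=
      (Finset.mul_prod_erase _ _ hk).symm
    have h2 : ∏ i ∈ (Finset.range n).erase k, (1 - v i) ≤ 1 :=
      Finset.prod_le_one (fun i hi => (h01 i (Finset.mem_of_mem_erase hi)).1)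
        (fun i hi => (h01 i (Finset.mem_of_mem_erase hi)).2)
    have h3 : (0 : ℝ) ≤ ∏ i ∈ (Finset.range n).erase k, (1 - v i) :=
      Finset.prod_nonneg fun i hi => (h01 i (Finset.mem_of_mem_erase hi)).1
    nlinarith [(h01 k hk).1]
  have h0n : 0 ∈ Finset.range n := Finset.mem_range.mpr (Nat.succ_pos d)
  have hSpos : 0 < S := lt_of_lt_of_le (hv 0 h0n).1 (hvS 0 h0n)
  have hP : 0 < ∏ i ∈ Finset.range n, v i := Finset.prod_pos fun i hi => (hv i hi).1
  have hPS : ∏ i ∈ Finset.range n, v i ≤ S ^ n :=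
    calc ∏ i ∈ Finset.range n, v i ≤ ∏ _i ∈ Finset.range n, S :=
          Finset.prod_le_prod (fun i hi => (hv i hi).1.le) (fun i hi => hvS i hi)
      _ = S ^ n := by simp
  have hCS : S ^ 2 ≤ (n : ℝ) * Q := by
    have := sq_sum_le_card_mul_sum_sq (s := Finset.range n)
      (f := fun j => v j * ∏ i ∈ Finset.range j, (1 - v i))
    simpa [Finset.card_range] using this
  have hQpos : 0 < Q := by nlinarith [pow_pos hSpos 2]
  have hexp : -(d : ℝ) / 2 ≤ 0 := by
    rw [neg_div]; exact neg_nonpos.mpr (by positivity)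
  have hexp2 : -((d : ℝ) / ((d : ℝ) + 1)) ≤ 0 := neg_nonpos.mpr (by positivity)
  have key1 : Q ^ (-(d : ℝ) / 2) ≤ (S ^ 2 / (n : ℝ)) ^ (-(d : ℝ) / 2) := by
    apply Real.rpow_le_rpow_of_nonpos (by positivity) _ hexp
    rw [div_le_iff₀ hnpos]
    nlinarith
  have key2 : (S ^ 2 / (n : ℝ)) ^ (-(d : ℝ) / 2) = (n : ℝ) ^ ((d : ℝ) / 2) * S ^ (-(d : ℝ)) := by
    rw [Real.div_rpow (sq_nonneg S) (Nat.cast_nonneg n)]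
    have h1 : ((n : ℝ)) ^ (-(d : ℝ) / 2) = (((n : ℝ)) ^ ((d : ℝ) / 2))⁻¹ := by
      rw [neg_div, Real.rpow_neg (Nat.cast_nonneg n)]
    have h2 : (S ^ 2) ^ (-(d : ℝ) / 2) = S ^ (-(d : ℝ)) := by
      rw [← Real.rpow_natCast S 2, ← Real.rpow_mul hSpos.le]
      congr 1
      push_cast
      ring
    rw [h1, h2, div_inv_eq_mul, mul_comm]
  have key3 : S ^ (-(d : ℝ)) ≤ ∏ i ∈ Finset.range n, v i ^ (-((d : ℝ) / ((d : ℝ) + 1))) := by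
    have h1 : S ^ (-(d : ℝ)) = (S ^ n) ^ (-((d : ℝ) / ((d : ℝ) + 1))) := by
      rw [← Real.rpow_natCast S n, ← Real.rpow_mul hSpos.le]
      congr 1
      rw [hnℝ]
      have : (d : ℝ) + 1 ≠ 0 := by positivity
      field_simp
    have h2 : (S ^ n) ^ (-((d : ℝ) / ((d : ℝ) + 1)))
        ≤ (∏ i ∈ Finset.range n, v i) ^ (-((d : ℝ) / ((d : ℝ) + 1))) :=
      Real.rpow_le_rpow_of_nonpos hP hPS hexp2
    have h3 : (∏ i ∈ Finset.range n, v i) ^ (-((d : ℝ) / ((d : ℝ) + 1)))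
        = ∏ i ∈ Finset.range n, v i ^ (-((d : ℝ) / ((d : ℝ) + 1))) :=
      (Real.finset_prod_rpow _ _ (fun i hi => (hv i hi).1.le) _).symm
    rw [h1, ← h3]
    exact h2
  calc Q ^ (-(d : ℝ) / 2) ≤ (S ^ 2 / (n : ℝ)) ^ (-(d : ℝ) / 2) := key1
    _ = (n : ℝ) ^ ((d : ℝ) / 2) * S ^ (-(d : ℝ)) := key2
    _ ≤ (n : ℝ) ^ ((d : ℝ) / 2)
          * ∏ i ∈ Finset.range n, v i ^ (-((d : ℝ) / ((d : ℝ) + 1))) :=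
        mul_le_mul_of_nonneg_left key3 (Real.rpow_nonneg hnpos.le _)
    _ = ((d : ℝ) + 1) ^ ((d : ℝ) / 2)
          * ∏ i ∈ Finset.range n, v i ^ (-((d : ℝ) / ((d : ℝ) + 1))) := by rw [hnℝ]

/-- Finiteness of `∫ v^{-a}` against the Beta(1,M) law, for `0 ≤ a < 1`. -/
lemma betaOne_lintegral_rpow_lt_top (M : ℝ) (hM : 0 < M) (a : ℝ) (ha0 : 0 ≤ a) (ha1 : a < 1) :
    ∫⁻ v, ENNReal.ofReal (v ^ (-a)) ∂(betaOne M) < ⊤ := by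
  have hdens : Measurable fun v : ℝ => ENNReal.ofReal (M * (1 - v) ^ (M - 1)) := by fun_prop
  have hg : Measurable fun v : ℝ => ENNReal.ofReal (v ^ (-a)) := by fun_prop
  rw [betaOne, lintegral_withDensity_eq_lintegral_mul _ hdens hg,
    ← Measure.restrict_congr_set Ioc_ae_eq_Icc]
  set K1 : ℝ := max ((1 / 2 : ℝ) ^ (M - 1)) 1 with hK1
  set K2 : ℝ := (1 / 2 : ℝ) ^ (-a) with hK2
  have hK1one : (1 : ℝ) ≤ K1 := le_max_right _ _
  have hK2one : (1 : ℝ) ≤ K2 :=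
    Real.one_le_rpow_of_pos_of_le_one_of_nonpos (by norm_num) (by norm_num)
      (neg_nonpos.mpr ha0)
  set C : ℝ := M * (K1 * K2) with hC
  have hbound : ∀ v ∈ Set.Ioc (0 : ℝ) 1,
      (fun v : ℝ => ENNReal.ofReal (M * (1 - v) ^ (M - 1)) * ENNReal.ofReal (v ^ (-a))) v
        ≤ ENNReal.ofReal (C * (v ^ (-a) + (1 - v) ^ (M - 1))) := by
    intro v hv
    dsimp only
    have hv0 : 0 < v := hv.1
    have hv1 : v ≤ 1 := hv.2
    have h1v : 0 ≤ 1 - v := by linarith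
    have hdnn : 0 ≤ (1 - v) ^ (M - 1) := Real.rpow_nonneg h1v _
    have hvann : 0 ≤ v ^ (-a) := Real.rpow_nonneg hv0.le _
    rw [← ENNReal.ofReal_mul (by positivity)]
    apply ENNReal.ofReal_le_ofReal
    have hK1nn : (0 : ℝ) ≤ K1 := le_trans zero_le_one hK1one
    have hK2nn : (0 : ℝ) ≤ K2 := le_trans zero_le_one hK2one
    have hCnn : (0 : ℝ) ≤ M * (K1 * K2) := mul_nonneg hM.le (mul_nonneg hK1nn hK2nn)
    rcases le_or_gt v (1 / 2) with hhalf | hhalf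
    · -- (1-v)^(M-1) ≤ K1
      have hdle : (1 - v) ^ (M - 1) ≤ K1 := by
        rcases le_or_gt 0 (M - 1) with hM1 | hM1
        · exact le_trans (Real.rpow_le_one h1v (by linarith) hM1) (le_max_right _ _)
        · refine le_trans ?_ (le_max_left _ _)
          exact Real.rpow_le_rpow_of_nonpos (by norm_num) (by linarith) hM1.le
      calc M * (1 - v) ^ (M - 1) * v ^ (-a) ≤ M * K1 * v ^ (-a) :=
            mul_le_mul_of_nonneg_right (mul_le_mul_of_nonneg_left hdle hM.le) hvann
        _ ≤ M * (K1 * K2) * (v ^ (-a) + (1 - v) ^ (M - 1)) := by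
            apply mul_le_mul
            · nlinarith [mul_nonneg (mul_nonneg hM.le hK1nn) (sub_nonneg.mpr hK2one)]
            · linarith
            · exact hvann
            · exact hCnn
    · -- v^(-a) ≤ K2
      have hva : v ^ (-a) ≤ K2 :=
        Real.rpow_le_rpow_of_nonpos (by norm_num) hhalf.le (neg_nonpos.mpr ha0)
      calc M * (1 - v) ^ (M - 1) * v ^ (-a) ≤ M * (1 - v) ^ (M - 1) * K2 :=
            mul_le_mul_of_nonneg_left hva (mul_nonneg hM.le hdnn)
        _ = M * K2 * (1 - v) ^ (M - 1) := by ring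
        _ ≤ M * (K1 * K2) * (v ^ (-a) + (1 - v) ^ (M - 1)) := by
            apply mul_le_mul
            · nlinarith [mul_nonneg (mul_nonneg hM.le hK2nn) (sub_nonneg.mpr hK1one)]
            · linarith
            · exact hdnn
            · exact hCnn
  have hmeas2 : Measurable fun v : ℝ => ENNReal.ofReal (C * (v ^ (-a) + (1 - v) ^ (M - 1))) := by
    fun_prop
  have hle := setLIntegral_mono (μ := volume) hmeas2 hbound
  simp only [Pi.mul_apply]
  refine lt_of_le_of_lt hle ?_
  -- integrability of the dominating function
  have i1 : IntegrableOn (fun v : ℝ => v ^ (-a)) (Set.Ioc 0 1) volume := by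
    have h := intervalIntegral.intervalIntegrable_rpow' (a := 0) (b := 1)
      (show (-1 : ℝ) < -a by linarith)
    rwa [intervalIntegrable_iff_integrableOn_Ioc_of_le (by norm_num)] at h
  have i2 : IntegrableOn (fun v : ℝ => (1 - v) ^ (M - 1)) (Set.Ioc 0 1) volume := by
    have h := intervalIntegral.intervalIntegrable_rpow' (a := 0) (b := 1)
      (show (-1 : ℝ) < M - 1 by linarith)
    have h2 := (h.comp_sub_left 1).symm
    simp only [sub_zero, sub_self] at h2
    rwa [intervalIntegrable_iff_integrableOn_Ioc_of_le (by norm_num)] at h2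
  have hint : IntegrableOn (fun v : ℝ => C * (v ^ (-a) + (1 - v) ^ (M - 1)))
      (Set.Ioc 0 1) volume := (i1.add i2).const_mul C
  exact hint.setLIntegral_lt_top

/-- Expectation of a product of i.i.d.-type compositions factorizes. -/
lemma iid_prod_lintegral {Ω : Type*} [MeasurableSpace Ω] (μ : Measure Ω)
    [IsProbabilityMeasure μ] (V : ℕ → Ω → ℝ) (hVmeas : ∀ i, Measurable (V i))
    (hVindep : iIndepFun V μ)
    (g : ℝ → ENNReal) (hg : Measurable g) (n : ℕ) :
    ∫⁻ ω, ∏ i ∈ Finset.range n, g (V i ω) ∂μ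
      = ∏ i ∈ Finset.range n, ∫⁻ ω, g (V i ω) ∂μ := by
  have hX : iIndepFun (fun i ω => g (V i ω)) μ :=
    hVindep.comp (fun _ => g) (fun _ => hg)
  have hXm : ∀ i, Measurable fun ω => g (V i ω) := fun i => hg.comp (hVmeas i)
  induction n with
  | zero => simp
  | succ n ih =>
    have hindep : IndepFun (∏ i ∈ Finset.range n, fun ω => g (V i ω))
        (fun ω => g (V n ω)) μ := hX.indepFun_prod_range_succ hXm n
    have hprodfun : (∏ i ∈ Finset.range n, fun ω => g (V i ω))
        = fun ω => ∏ i ∈ Finset.range n, g (V i ω) := by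
      ext ω
      simp
    rw [hprodfun] at hindep
    have hmul := lintegral_mul_eq_lintegral_mul_lintegral_of_indepFun
      (Finset.measurable_prod _ fun i _ => hXm i) (hXm n) hindep
    calc ∫⁻ ω, ∏ i ∈ Finset.range (n + 1), g (V i ω) ∂μ
        = ∫⁻ ω, ((fun ω' => ∏ i ∈ Finset.range n, g (V i ω')) * fun ω' => g (V n ω')) ω ∂μ := by
          apply lintegral_congr
          intro ω
          simp [Finset.prod_range_succ]
      _ = (∫⁻ ω, ∏ i ∈ Finset.range n, g (V i ω) ∂μ) * ∫⁻ ω, g (V n ω) ∂μ := hmul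
      _ = ∏ i ∈ Finset.range (n + 1), ∫⁻ ω, g (V i ω) ∂μ := by
          rw [Finset.prod_range_succ, ih]

/-- For `d ≥ 1`, `M > 0` and `(V_i)` i.i.d. Beta(1,M) with stick-breaking weights
`ϖ_j`, the expectation `E[(∑_{j=1}^{d+1} ϖ_j²)^{−d/2}]` is finite. -/
theorem expectation_inv_sum_sq_stick_lt_top
    {Ω : Type*} [MeasurableSpace Ω] (μ : Measure Ω) [IsProbabilityMeasure μ]
    (d : ℕ) (hd : 1 ≤ d) (M : ℝ) (hM : 0 < M)
    (V : ℕ → Ω → ℝ) (hVmeas : ∀ i, Measurable (V i))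
    (hVindep : iIndepFun V μ)
    (hVlaw : ∀ i, Measure.map (V i) μ = betaOne M) :
    ∫⁻ ω, ENNReal.ofReal
        ((∑ j ∈ Finset.range (d + 1), (stick V j ω) ^ 2) ^ (-(d : ℝ) / 2)) ∂μ < ⊤ := by
  set a : ℝ := (d : ℝ) / ((d : ℝ) + 1) with ha
  have ha0 : 0 ≤ a := by positivity
  have ha1 : a < 1 := by
    rw [ha, div_lt_one (by positivity)]
    linarith
  set g : ℝ → ENNReal := fun v => ENNReal.ofReal (v ^ (-a)) with hgdef
  have hg : Measurable g := by rw [hgdef]; fun_prop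
  -- a.e., all coordinates are in (0, 1]
  have hae : ∀ᵐ ω ∂μ, ∀ i, V i ω ∈ Set.Ioc (0 : ℝ) 1 := by
    rw [ae_all_iff]
    intro i
    have hnull : Measure.map (V i) μ ((Set.Ioc (0 : ℝ) 1)ᶜ) = 0 := by
      rw [hVlaw i, betaOne, withDensity_apply _ measurableSet_Ioc.compl,
        Measure.restrict_restrict measurableSet_Ioc.compl]
      have hsub : (Set.Ioc (0 : ℝ) 1)ᶜ ∩ Set.Icc 0 1 ⊆ ({0} : Set ℝ) := by
        intro x hx
        rcases hx with ⟨hx1, hx2, hx3⟩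
        simp only [Set.mem_compl_iff, Set.mem_Ioc, not_and, not_le] at hx1
        simp only [Set.mem_singleton_iff]
        rcases lt_or_eq_of_le hx2 with h | h
        · exact absurd (hx1 h) (not_lt.mpr hx3)
        · exact h.symm
      rw [Measure.restrict_eq_zero.mpr (measure_mono_null hsub (measure_singleton 0))]
      exact lintegral_zero_measure _
    rw [ae_iff]
    have : {ω | ¬ V i ω ∈ Set.Ioc (0 : ℝ) 1} = V i ⁻¹' (Set.Ioc (0 : ℝ) 1)ᶜ := rfl
    rw [this, ← Measure.map_apply (hVmeas i) measurableSet_Ioc.compl]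
    exact hnull
  -- a.e. pointwise bound
  have hbound : ∀ᵐ ω ∂μ, ENNReal.ofReal
      ((∑ j ∈ Finset.range (d + 1), (stick V j ω) ^ 2) ^ (-(d : ℝ) / 2))
      ≤ ENNReal.ofReal (((d : ℝ) + 1) ^ ((d : ℝ) / 2))
          * ∏ i ∈ Finset.range (d + 1), g (V i ω) := by
    filter_upwards [hae] with ω hω
    have h := aux_pointwise d hd (fun i => V i ω) (fun i _ => hω i)
    calc ENNReal.ofReal ((∑ j ∈ Finset.range (d + 1), (stick V j ω) ^ 2) ^ (-(d : ℝ) / 2))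
        ≤ ENNReal.ofReal (((d : ℝ) + 1) ^ ((d : ℝ) / 2)
            * ∏ i ∈ Finset.range (d + 1), (V i ω) ^ (-a)) := by
          apply ENNReal.ofReal_le_ofReal
          simpa [stick, ha] using h
      _ = ENNReal.ofReal (((d : ℝ) + 1) ^ ((d : ℝ) / 2))
            * ∏ i ∈ Finset.range (d + 1), g (V i ω) := by
          rw [ENNReal.ofReal_mul (by positivity),
            ENNReal.ofReal_prod_of_nonneg (fun i _ => Real.rpow_nonneg (hω i).1.le _)]
  have hprodmeas : Measurable fun ω => ∏ i ∈ Finset.range (d + 1), g (V i ω) :=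
    Finset.measurable_prod _ fun i _ => hg.comp (hVmeas i)
  calc ∫⁻ ω, ENNReal.ofReal
        ((∑ j ∈ Finset.range (d + 1), (stick V j ω) ^ 2) ^ (-(d : ℝ) / 2)) ∂μ
      ≤ ∫⁻ ω, ENNReal.ofReal (((d : ℝ) + 1) ^ ((d : ℝ) / 2))
          * ∏ i ∈ Finset.range (d + 1), g (V i ω) ∂μ := lintegral_mono_ae hbound
    _ = ENNReal.ofReal (((d : ℝ) + 1) ^ ((d : ℝ) / 2))
          * ∫⁻ ω, ∏ i ∈ Finset.range (d + 1), g (V i ω) ∂μ :=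
        lintegral_const_mul _ hprodmeas
    _ = ENNReal.ofReal (((d : ℝ) + 1) ^ ((d : ℝ) / 2))
          * ∏ i ∈ Finset.range (d + 1), ∫⁻ ω, g (V i ω) ∂μ := by
        rw [iid_prod_lintegral μ V hVmeas hVindep g hg]
    _ < ⊤ := by
        apply ENNReal.mul_lt_top ENNReal.ofReal_lt_top
        apply ENNReal.prod_lt_top
        intro i _
        have hmap : ∫⁻ ω, g (V i ω) ∂μ = ∫⁻ v, g v ∂(betaOne M) := by
          rw [← hVlaw i, lintegral_map hg (hVmeas i)]
        rw [hmap]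
        exact betaOne_lintegral_rpow_lt_top M hM a ha0 ha1
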